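/- arXiv:2408.00807 — 3 statements merged into one kernel-verified Lean document; each statement's English description precedes it below -/
import Mathlib

section
/- For positive integers n, l and parameters x, z, q with denominators nonzero: ∑_{i=1}^n [(1 - x^i) (z^{-1}q;q)_{i-1} z^{i-1} / (q;q)_i] · h_{l-1}(1/(z-q^i), ..., 1/(z-q^n)) = [z^n (z^{-1}q;q)_n/(q;q)_n] · ∑_{i=1}^n [n choose i]_q (-1)^{i-1} q^{binom(i+1,2) - ni} (x;q)_i / (z - q^i)^l. -/
open Finset


noncomputable def qPoch (q a : ℝ) (n : ℕ) : ℝ := ∏ j ∈ Finset.range n, (1 - a * q ^ j)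

noncomputable def qBinom (q : ℝ) (n r : ℕ) : ℝ :=
  if r ≤ n then qPoch q q n / (qPoch q q r * qPoch q q (n - r)) else 0

/-- Complete homogeneous symmetric polynomial `h_k` of the entries of a list. -/
noncomputable def hPoly : List ℝ → ℕ → ℝ
  | _, 0 => 1
  | [], _ + 1 => 0
  | a :: as, k + 1 => a * hPoly (a :: as) k + hPoly as (k + 1)
termination_by l k => (l.length, k)

/-- The list `[f i, f (i+1), …, f n]`. -/
def varList (f : ℕ → ℝ) (i n : ℕ) : List ℝ := (List.range (n + 1 - i)).map fun j => f (i + j)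

noncomputable def Acoef (q z : ℝ) (n i j : ℕ) : ℝ :=
  ∏ k ∈ (Finset.Icc i n).erase j, ((z - q^k) / (q^j - q^k))

lemma hPoly_zero (L : List ℝ) : hPoly L 0 = 1 := by cases L <;> simp [hPoly]
lemma hPoly_cons (a : ℝ) (as : List ℝ) (k : ℕ) :
    hPoly (a::as) (k+1) = a * hPoly (a::as) k + hPoly as (k+1) := by simp [hPoly]
lemma hPoly_singleton (a : ℝ) (m : ℕ) : hPoly [a] m = a ^ m := by
  induction m with
  | zero => simp [hPoly]
  | succ k ih => simp [hPoly, ih, pow_succ]; ring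

lemma varList_self (f : ℕ → ℝ) (n : ℕ) : varList f n n = [f n] := by
  simp [varList, show n + 1 - n = 1 by omega, List.range_succ]

lemma varList_cons (f : ℕ → ℝ) {i n : ℕ} (h : i ≤ n) :
    varList f i n = f i :: varList f (i+1) n := by
  unfold varList
  rw [show n + 1 - i = (n - i) + 1 by omega, List.range_succ_eq_map]
  simp only [List.map_cons, List.map_map, add_zero, show n + 1 - (i+1) = n - i by omega]
  congr 1
  refine List.map_congr_left fun j _ => ?_
  simp [Function.comp]
  congr 1
  omega

lemma qPoch_succ (q a : ℝ) (m : ℕ) : qPoch q a (m+1) = qPoch q a m * (1 - a * q^m) :=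
  Finset.prod_range_succ _ _

lemma qPoch_q_eq (q : ℝ) (m : ℕ) : qPoch q q m = ∏ k ∈ Icc 1 m, (1 - q^k) := by
  rw [← Finset.Ico_add_one_right_eq_Icc, Finset.prod_Ico_eq_prod_range]
  simp only [show m + 1 - 1 = m from rfl, qPoch]
  refine Finset.prod_congr rfl fun j _ => ?_
  rw [add_comm, pow_succ, mul_comm (q^j) q]

lemma qPoch_q_ne (q : ℝ) (hden1 : ∀ j : ℕ, 1 ≤ j → 1 - q ^ j ≠ 0) (m : ℕ) :
    qPoch q q m ≠ 0 := by
  rw [qPoch_q_eq]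
  exact Finset.prod_ne_zero_iff.mpr fun k hk => hden1 k (Finset.mem_Icc.mp hk).1

lemma W_eq (q z : ℝ) (hz : z ≠ 0) (m : ℕ) :
    qPoch q (z⁻¹ * q) m * z^m = ∏ k ∈ Icc 1 m, (z - q^k) := by
  rw [← Finset.Ico_add_one_right_eq_Icc, Finset.prod_Ico_eq_prod_range]
  simp only [show m + 1 - 1 = m from rfl, qPoch]
  rw [show z ^ m = ∏ _j ∈ range m, z by simp, ← Finset.prod_mul_distrib]
  refine Finset.prod_congr rfl fun j _ => ?_
  have : q ^ (1 + j) = q * q ^ j := by rw [pow_add, pow_one]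
  field_simp
  ring

lemma qpow_ne (q : ℝ) (hq : q ≠ 0) (hden1 : ∀ j : ℕ, 1 ≤ j → 1 - q ^ j ≠ 0)
    {a b : ℕ} (h : a ≠ b) : q ^ a ≠ q ^ b := by
  wlog hab : a < b generalizing a b
  · exact (this h.symm (by omega)).symm
  intro he
  have h2 : q ^ b = q ^ a * q ^ (b - a) := by rw [← pow_add]; congr 1; omega
  have h3 : q ^ a * (1 - q ^ (b - a)) = 0 := by rw [← he] at h2; linarith [h2]
  rcases mul_eq_zero.mp h3 with h4 | h4
  · exact pow_ne_zero a hq h4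
  · exact hden1 (b - a) (by omega) h4

lemma qpow_sub_ne (q : ℝ) (hq : q ≠ 0) (hden1 : ∀ j : ℕ, 1 ≤ j → 1 - q ^ j ≠ 0)
    {a b : ℕ} (h : a ≠ b) : q ^ a - q ^ b ≠ 0 :=
  sub_ne_zero.mpr (qpow_ne q hq hden1 h)

lemma lagrange_one (q z : ℝ) (hq : q ≠ 0) (hden1 : ∀ j : ℕ, 1 ≤ j → 1 - q ^ j ≠ 0)
    (n i : ℕ) (hin : i ≤ n) : ∑ j ∈ Icc i n, Acoef q z n i j = 1 := by
  have hinj : Set.InjOn (fun t : ℕ => q ^ t) ↑(Icc i n) := by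
    intro a _ b _ hab
    by_contra hne
    exact qpow_ne q hq hden1 hne hab
  have hne : (Icc i n).Nonempty := ⟨i, by simp [hin]⟩
  have h := Lagrange.sum_basis hinj hne
  have h2 := congrArg (Polynomial.eval z) h
  rw [Polynomial.eval_finset_sum, Polynomial.eval_one] at h2
  rw [← h2]
  refine Finset.sum_congr rfl fun j hj => ?_
  rw [Lagrange.basis, Polynomial.eval_prod, Acoef]
  refine Finset.prod_congr rfl fun k hk => ?_
  simp [Lagrange.basisDivisor]
  rw [div_eq_inv_mul]

lemma Gstep (q z : ℝ) (n : ℕ) (hq : q ≠ 0)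
    (hden1 : ∀ j : ℕ, 1 ≤ j → 1 - q ^ j ≠ 0)
    (hden2 : ∀ j : ℕ, 1 ≤ j → z - q ^ j ≠ 0)
    {m i : ℕ} (h1 : 1 ≤ i) (h2 : i < n) :
    ∑ j ∈ Icc i n, (1/(z - q^j))^(m+1) * Acoef q z n i j
      = (1/(z - q^i)) * ∑ j ∈ Icc i n, (1/(z - q^j))^m * Acoef q z n i j
        + ∑ j ∈ Icc (i+1) n, (1/(z - q^j))^(m+1) * Acoef q z n (i+1) j := by
  have hins : Icc i n = insert i (Icc (i+1) n) := by
    ext t; simp only [mem_Icc, mem_insert]; omega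
  have hnotmem : i ∉ Icc (i+1) n := by simp
  have hAii : ∀ j ∈ Icc (i+1) n,
      (1/(z - q^j))^(m+1) * Acoef q z n i j
        = 1/(z - q^i) * ((1/(z - q^j))^m * Acoef q z n i j)
          + (1/(z - q^j))^(m+1) * Acoef q z n (i+1) j := by
    intro j hj
    rw [Finset.mem_Icc] at hj
    have hA : Acoef q z n i j = ((z - q^i)/(q^j - q^i)) * Acoef q z n (i+1) j := by
      unfold Acoef
      rw [show (Icc i n).erase j = insert i ((Icc (i+1) n).erase j) by
        ext t; simp only [mem_erase, mem_Icc, mem_insert]; omega]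
      rw [Finset.prod_insert (by simp only [mem_erase, mem_Icc]; omega)]
    rw [hA]
    have hzi : z - q^i ≠ 0 := hden2 i h1
    have hzj : z - q^j ≠ 0 := hden2 j (by omega)
    have hji : q^j - q^i ≠ 0 := qpow_sub_ne q hq hden1 (by omega)
    set B := Acoef q z n (i+1) j
    rw [pow_succ]
    field_simp
    ring
  have hsum := Finset.sum_congr rfl hAii
  rw [hins, Finset.sum_insert hnotmem, Finset.sum_insert hnotmem, hsum,
    Finset.sum_add_distrib, ← Finset.mul_sum]
  rw [show (1/(z - q^i))^(m+1) = 1/(z - q^i) * (1/(z - q^i))^m by rw [pow_succ]; ring]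
  ring

lemma varList_cons' (q z : ℝ) {i n : ℕ} (h : i ≤ n) :
    varList (fun j => 1/(z - q^j)) i n
      = (1/(z - q^i)) :: varList (fun j => 1/(z - q^j)) (i+1) n :=
  varList_cons _ h

lemma expand (q z : ℝ) (n : ℕ) (hq : q ≠ 0)
    (hden1 : ∀ j : ℕ, 1 ≤ j → 1 - q ^ j ≠ 0)
    (hden2 : ∀ j : ℕ, 1 ≤ j → z - q ^ j ≠ 0) :
    ∀ m i, 1 ≤ i → i ≤ n →
      hPoly (varList (fun j => 1/(z - q^j)) i n) m
        = ∑ j ∈ Icc i n, (1/(z - q^j))^m * Acoef q z n i j := by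
  intro m
  induction m with
  | zero =>
    intro i h1 h2
    rw [hPoly_zero]
    simp only [pow_zero, one_mul]
    exact (lagrange_one q z hq hden1 n i h2).symm
  | succ m ih =>
    suffices H : ∀ k i, 1 ≤ i → i ≤ n → n - i ≤ k →
        hPoly (varList (fun j => 1/(z - q^j)) i n) (m+1)
          = ∑ j ∈ Icc i n, (1/(z - q^j))^(m+1) * Acoef q z n i j by
      exact fun i h1 h2 => H (n - i) i h1 h2 le_rfl
    intro k
    induction k with
    | zero =>
      intro i h1 h2 hk
      have hin : i = n := by omega
      subst hin
      rw [varList_self, hPoly_singleton, Finset.Icc_self, Finset.sum_singleton]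
      unfold Acoef
      rw [Finset.Icc_self, Finset.erase_singleton, Finset.prod_empty, mul_one, one_div, inv_pow]
    | succ k ihk =>
      intro i h1 h2 hk
      rcases eq_or_lt_of_le h2 with heq | hlt
      · exact ihk i h1 h2 (by omega)
      · have hle : i ≤ n := le_of_lt hlt
        rw [varList_cons' q z hle, hPoly_cons, ← varList_cons' q z hle,
          ih i h1 h2, ihk (i+1) (by omega) hlt (by omega)]
        exact (Gstep q z n hq hden1 hden2 h1 hlt).symm

lemma qPoch_zero (q a : ℝ) : qPoch q a 0 = 1 := Finset.prod_range_zero _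

lemma qBinom_zero (q : ℝ) (hden1 : ∀ j : ℕ, 1 ≤ j → 1 - q ^ j ≠ 0) (n : ℕ) :
    qBinom q n 0 = 1 := by
  simp [qBinom, qPoch_zero, div_self (qPoch_q_ne q hden1 n)]

lemma qBinom_pascal (q : ℝ) (hden1 : ∀ j : ℕ, 1 ≤ j → 1 - q ^ j ≠ 0)
    {j i : ℕ} (h1 : 1 ≤ i) (h2 : i ≤ j + 1) :
    qBinom q (j+1) i = qBinom q j i + q^(j+1-i) * qBinom q j (i-1) := by
  rcases eq_or_lt_of_le h2 with heq | hlt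
  · subst heq
    simp only [qBinom, le_refl, if_true, Nat.sub_self, qPoch_zero, mul_one,
      show ¬ (j+1 ≤ j) by omega, if_false, zero_add,
      show j+1-(j+1) = 0 by omega, show j+1-1 = j by omega, le_refl, if_true,
      Nat.sub_self, qPoch_zero, mul_one, pow_zero, one_mul]
    rw [div_self (qPoch_q_ne q hden1 (j+1)), div_self (qPoch_q_ne q hden1 j)]
  · have hij : i ≤ j := by omega
    obtain ⟨s, rfl⟩ : ∃ s, i = s + 1 := ⟨i - 1, by omega⟩
    obtain ⟨t, rfl⟩ : ∃ t, j = s + 1 + t := ⟨j - (s+1), by omega⟩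
    simp only [qBinom, show s+1 ≤ s+1+t+1 by omega, if_true, show s+1 ≤ s+1+t by omega,
      if_true, show s+1-1 = s by omega, show s ≤ s+1+t by omega, if_true,
      show s+1+t+1-(s+1) = t+1 by omega, show s+1+t-(s+1) = t by omega,
      show s+1+t-s = t+1 by omega]
    have e1 : qPoch q q (s+1+t+1) = qPoch q q (s+1+t) * (1 - q^(s+1+t+1)) := by
      rw [qPoch_succ, pow_succ, mul_comm (q^(s+1+t)) q]
    have e2 : qPoch q q (t+1) = qPoch q q t * (1 - q^(t+1)) := by
      rw [qPoch_succ, pow_succ, mul_comm (q^t) q]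
    have e3 : qPoch q q (s+1) = qPoch q q s * (1 - q^(s+1)) := by
      rw [qPoch_succ, pow_succ, mul_comm (q^s) q]
    have n1 := qPoch_q_ne q hden1 (s+1+t)
    have n2 := qPoch_q_ne q hden1 t
    have n3 := qPoch_q_ne q hden1 s
    have n4 := hden1 (t+1) (by omega)
    have n5 := hden1 (s+1) (by omega)
    rw [e1, e2, e3]
    field_simp
    ring

lemma qBinom_gt (q : ℝ) {n r : ℕ} (h : n < r) : qBinom q n r = 0 := by
  simp [qBinom, show ¬ (r ≤ n) by omega]

lemma bsucc (t : ℕ) : (t+1)*t/2 = t*(t-1)/2 + t := by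
  have h1 : (t+1)*t = t*(t-1) + t*2 := by
    cases t with
    | zero => rfl
    | succ u => simp [Nat.add_sub_cancel]; ring
  rw [h1, Nat.add_mul_div_right _ _ (by norm_num : 0 < 2)]

lemma qbt (q x : ℝ) (hq : q ≠ 0) (hden1 : ∀ j : ℕ, 1 ≤ j → 1 - q ^ j ≠ 0) :
    ∀ j, ∑ i ∈ range (j+1), (-1)^i * q^(i*(i-1)/2) * qBinom q j i * x^i = qPoch q x j := by
  intro j
  induction j with
  | zero => simp [qBinom, qPoch_zero]
  | succ j ih =>
    have hg1 : ∑ t ∈ range (j+1),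
        (-1)^(t+1) * q^((t+1)*t/2) * qBinom q j (t+1) * x^(t+1) = qPoch q x j - 1 := by
      have e1 := Finset.sum_range_succ
        (fun i => (-1:ℝ)^i * q^(i*(i-1)/2) * qBinom q j i * x^i) (j+1)
      have e2 := Finset.sum_range_succ'
        (fun i => (-1:ℝ)^i * q^(i*(i-1)/2) * qBinom q j i * x^i) (j+1)
      rw [e1] at e2
      simp only [qBinom_gt q (by omega : j < j+1), mul_zero, zero_mul, add_zero,
        pow_zero, mul_one, Nat.zero_mul, Nat.zero_div, one_mul,
        qBinom_zero q hden1, Nat.add_sub_cancel] at e2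
      rw [ih] at e2
      linarith [e2]
    rw [Finset.sum_range_succ']
    simp only [pow_zero, mul_one, Nat.zero_mul, Nat.zero_div, one_mul,
      qBinom_zero q hden1, Nat.add_sub_cancel]
    have hstep : ∀ t ∈ range (j+1),
        (-1)^(t+1) * q^((t+1)*t/2) * qBinom q (j+1) (t+1) * x^(t+1)
          = (-1)^(t+1) * q^((t+1)*t/2) * qBinom q j (t+1) * x^(t+1)
            + (-(x * q^j)) * ((-1)^t * q^(t*(t-1)/2) * qBinom q j t * x^t) := by
      intro t ht
      rw [Finset.mem_range] at ht
      rw [qBinom_pascal q hden1 (by omega) (by omega)]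
      simp only [Nat.add_sub_cancel]
      rw [show j + 1 - (t+1) = j - t by omega,
        pow_sub₀ q hq (by omega : t ≤ j), bsucc t, pow_add]
      have hqt : q ^ t ≠ 0 := pow_ne_zero _ hq
      field_simp
      ring
    rw [Finset.sum_congr rfl hstep, Finset.sum_add_distrib, ← Finset.mul_sum, hg1, ih,
      qPoch_succ]
    ring

lemma hgx (q x : ℝ) (hq : q ≠ 0) (hden1 : ∀ j : ℕ, 1 ≤ j → 1 - q ^ j ≠ 0) (j : ℕ) :
    ∑ t ∈ range j, (-1)^(t+1) * q^((t+1)*t/2) * qBinom q j (t+1) * x^(t+1)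
      = qPoch q x j - 1 := by
  have e2 := Finset.sum_range_succ'
    (fun i => (-1:ℝ)^i * q^(i*(i-1)/2) * qBinom q j i * x^i) j
  rw [qbt q x hq hden1 j] at e2
  simp only [pow_zero, mul_one, Nat.zero_mul, Nat.zero_div, one_mul,
    qBinom_zero q hden1, Nat.add_sub_cancel] at e2
  linarith [e2]

lemma qPoch_one (q : ℝ) {j : ℕ} (hj : 1 ≤ j) : qPoch q (1:ℝ) j = 0 := by
  refine Finset.prod_eq_zero (Finset.mem_range.mpr (by omega : 0 < j)) ?_
  norm_num

lemma Tlem (q x : ℝ) (hq : q ≠ 0) (hden1 : ∀ j : ℕ, 1 ≤ j → 1 - q ^ j ≠ 0)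
    {j : ℕ} (hj : 1 ≤ j) :
    ∑ t ∈ range j, (1 - x^(t+1)) * ((-1)^t * q^((t+1)*t/2) * qBinom q j (t+1))
      = qPoch q x j := by
  have h1 := hgx q x hq hden1 j
  have h2 := hgx q 1 hq hden1 j
  rw [qPoch_one q hj] at h2
  have hterm : ∀ t ∈ range j,
      (1 - x^(t+1)) * ((-1)^t * q^((t+1)*t/2) * qBinom q j (t+1))
        = ((-1)^(t+1) * q^((t+1)*t/2) * qBinom q j (t+1) * x^(t+1))
          - ((-1)^(t+1) * q^((t+1)*t/2) * qBinom q j (t+1) * 1^(t+1)) := by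
    intro t _
    rw [pow_succ (-1:ℝ) t]
    ring
  rw [Finset.sum_congr rfl hterm, Finset.sum_sub_distrib, h1, h2]
  ring

lemma prod_Icc_shift (f : ℕ → ℝ) (a m : ℕ) :
    ∏ k ∈ Icc (a+1) (a+m), f k = ∏ t ∈ Icc 1 m, f (a+t) := by
  refine Finset.prod_nbij' (fun k => k - a) (fun t => a + t) ?_ ?_ ?_ ?_ ?_ <;>
    intros k hk <;> simp only [mem_Icc] at * <;> first | omega | (congr 1; omega)

lemma prod_Icc_reflect (f : ℕ → ℝ) {j m : ℕ} (hm : m < j) :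
    ∏ k ∈ Icc 1 m, f (j - k) = ∏ t ∈ Icc (j-m) (j-1), f t := by
  refine Finset.prod_nbij' (fun k => j - k) (fun t => j - t) ?_ ?_ ?_ ?_ ?_ <;>
    intros k hk <;> simp only [mem_Icc] at * <;> first | omega | (congr 1; omega)

lemma sum_Icc_id (m : ℕ) : ∑ k ∈ Icc 1 m, k = (m+1)*m/2 := by
  have h : range (m+1) = insert 0 (Icc 1 m) := by
    ext t; simp only [mem_range, mem_insert, mem_Icc]; omega
  have h2 := Finset.sum_range_id (m+1)
  rw [h, Finset.sum_insert (by simp)] at h2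
  simpa [Nat.add_sub_cancel] using h2

lemma Dfact (q : ℝ) (hq : q ≠ 0) (hden1 : ∀ j : ℕ, 1 ≤ j → 1 - q ^ j ≠ 0)
    {m j : ℕ} (hm : m < j) :
    ∏ k ∈ Icc 1 m, (q^j - q^k)
      = (-1)^m * q^((m+1)*m/2) * (qPoch q q (j-1) / qPoch q q (j-1-m)) := by
  have hterm : ∀ k ∈ Icc 1 m, q^j - q^k = (-1) * (q^k * (1 - q^(j-k))) := by
    intro k hk
    rw [mem_Icc] at hk
    have : q^j = q^k * q^(j-k) := by rw [← pow_add]; congr 1; omega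
    rw [this]; ring
  have hrefl : ∏ k ∈ Icc 1 m, (1 - q^(j-k)) = qPoch q q (j-1) / qPoch q q (j-1-m) := by
    have hr := prod_Icc_reflect (fun t => 1 - q^t) hm
    rw [hr]
    have hsplit : Icc 1 (j-1) = Icc 1 (j-1-m) ∪ Icc (j-m) (j-1) := by
      ext t; simp only [mem_Icc, mem_union]; omega
    have hdisj : Disjoint (Icc 1 (j-1-m)) (Icc (j-m) (j-1)) := by
      rw [Finset.disjoint_left]
      intro t ht1 ht2; simp only [mem_Icc] at *; omega
    have hP := qPoch_q_eq q (j-1)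
    rw [hsplit, Finset.prod_union hdisj, ← qPoch_q_eq] at hP
    rw [eq_div_iff (qPoch_q_ne q hden1 (j-1-m)), hP]
    ring
  rw [Finset.prod_congr rfl hterm, Finset.prod_mul_distrib, Finset.prod_mul_distrib,
    Finset.prod_const, Finset.prod_pow_eq_pow_sum, sum_Icc_id,
    Nat.card_Icc, Nat.add_sub_cancel, hrefl]
  ring

lemma Efact (q : ℝ) {j n : ℕ} (hjn : j ≤ n) :
    ∏ k ∈ Icc (j+1) n, (q^j - q^k) = q^(j*(n-j)) * qPoch q q (n-j) := by
  have h : Icc (j+1) n = Icc (j+1) (j + (n-j)) := by congr 1; omega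
  rw [h, prod_Icc_shift]
  have hterm : ∀ t ∈ Icc 1 (n-j), q^j - q^(j+t) = q^j * (1 - q^t) := by
    intro t _
    rw [pow_add]; ring
  rw [Finset.prod_congr rfl hterm, Finset.prod_mul_distrib, Finset.prod_const,
    Nat.card_Icc, Nat.add_sub_cancel, ← pow_mul, ← qPoch_q_eq]

lemma tri (j : ℕ) : j*(j-1)/2 + j*(j+1)/2 = j*j := by
  cases j with
  | zero => rfl
  | succ u =>
    obtain ⟨k, hk⟩ := Nat.even_mul_succ_self u
    obtain ⟨m, hm⟩ := Nat.even_mul_succ_self (u+1)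
    have h1 : (u+1)*((u+1)-1) = k+k := by rw [Nat.add_sub_cancel, mul_comm]; exact hk
    have h2 : (u+1)*((u+1)+1) = m+m := hm
    have h3 : (u+1)*((u+1)-1) + (u+1)*((u+1)+1) = 2*((u+1)*(u+1)) := by
      rw [Nat.add_sub_cancel]; ring
    omega

lemma sumLHS (q z x : ℝ) (n : ℕ) (hq : q ≠ 0) (hz : z ≠ 0)
    (hden1 : ∀ j : ℕ, 1 ≤ j → 1 - q ^ j ≠ 0)
    (hden2 : ∀ j : ℕ, 1 ≤ j → z - q ^ j ≠ 0)
    {j : ℕ} (h1 : 1 ≤ j) (hjn : j ≤ n) :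
    ∑ i ∈ Icc 1 j, (1 - x ^ i) * qPoch q (z⁻¹ * q) (i - 1) * z ^ (i - 1) / qPoch q q i *
        Acoef q z n i j
      = Acoef q z n 1 j * qPoch q x j / (1 - q^j) := by
  have hterm : ∀ i ∈ Icc 1 j,
      (1 - x ^ i) * qPoch q (z⁻¹ * q) (i - 1) * z ^ (i - 1) / qPoch q q i * Acoef q z n i j
        = Acoef q z n 1 j * ((1 - x^i) * ((-1)^(i-1) * q^(i*(i-1)/2) * qBinom q j i))
            / (1 - q^j) := by
    intro i hi
    rw [mem_Icc] at hi
    obtain ⟨hi1, hij⟩ := hi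
    set R := ∏ k ∈ Icc 1 (i-1), (z - q^k) with hR
    set D := ∏ k ∈ Icc 1 (i-1), (q^j - q^k) with hD
    have f1 : qPoch q (z⁻¹ * q) (i-1) * z^(i-1) = R := W_eq q z hz (i-1)
    have hRne : R ≠ 0 := Finset.prod_ne_zero_iff.mpr
      fun k hk => hden2 k (Finset.mem_Icc.mp hk).1
    have hDne : D ≠ 0 := Finset.prod_ne_zero_iff.mpr
      fun k hk => qpow_sub_ne q hq hden1 (by have := (Finset.mem_Icc.mp hk); omega)
    have hsplit : (Icc 1 n).erase j = Icc 1 (i-1) ∪ ((Icc i n).erase j) := by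
      ext t; simp only [mem_erase, mem_Icc, mem_union]; omega
    have hdisj : Disjoint (Icc 1 (i-1)) ((Icc i n).erase j) := by
      rw [Finset.disjoint_left]
      intro t ht1 ht2
      simp only [mem_Icc, mem_erase] at *
      omega
    have f2 : Acoef q z n 1 j = (R / D) * Acoef q z n i j := by
      unfold Acoef
      rw [hsplit, Finset.prod_union hdisj, Finset.prod_div_distrib, ← hR, ← hD]
    have f3 : D = (-1)^(i-1) * q^(i*(i-1)/2) * (qPoch q q (j-1) / qPoch q q (j-i)) := by
      have := Dfact q hq hden1 (show i-1 < j by omega)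
      rw [show (i-1)+1 = i by omega, show j-1-(i-1) = j-i by omega] at this
      exact this
    have f4 : qBinom q j i = qPoch q q j / (qPoch q q i * qPoch q q (j-i)) := by
      simp [qBinom, hij]
    have f5 : qPoch q q j = qPoch q q (j-1) * (1 - q^j) := by
      have := qPoch_succ q q (j-1)
      rw [show (j-1)+1 = j by omega] at this
      rw [this, show q * q^(j-1) = q^j by rw [← pow_succ']; congr 1; omega]
    have n1 := qPoch_q_ne q hden1 i
    have n2 := qPoch_q_ne q hden1 (j-i)
    have n3 := qPoch_q_ne q hden1 (j-1)
    have n4 := hden1 j h1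
    have n5 : ((-1:ℝ))^(i-1) ≠ 0 := pow_ne_zero _ (by norm_num)
    have n6 : (q:ℝ)^(i*(i-1)/2) ≠ 0 := pow_ne_zero _ hq
    rw [mul_assoc (1 - x^i), f1, f2, f3, f4, f5]
    field_simp
  rw [Finset.sum_congr rfl hterm, ← Finset.sum_div, ← Finset.mul_sum]
  congr 2
  rw [← Finset.Ico_add_one_right_eq_Icc, Finset.sum_Ico_eq_sum_range]
  simp only [show j + 1 - 1 = j from rfl]
  rw [← Tlem q x hq hden1 h1]
  refine Finset.sum_congr rfl fun t _ => ?_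
  rw [show 1 + t = t + 1 by omega]
  simp only [Nat.add_sub_cancel]

lemma sumRHS (q z x : ℝ) (n : ℕ) (hq : q ≠ 0) (hz : z ≠ 0)
    (hden1 : ∀ j : ℕ, 1 ≤ j → 1 - q ^ j ≠ 0)
    (hden2 : ∀ j : ℕ, 1 ≤ j → z - q ^ j ≠ 0)
    {j : ℕ} (h1 : 1 ≤ j) (hjn : j ≤ n) :
    z ^ n * qPoch q (z⁻¹ * q) n / qPoch q q n *
      (qBinom q n j * (-1) ^ (j - 1) * q ^ (((j * (j + 1) / 2 : ℕ) : ℤ) - (n : ℤ) * j) *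
        qPoch q x j / (z - q ^ j))
      = Acoef q z n 1 j * qPoch q x j / (1 - q ^ j) := by
  have hmem : j ∈ Icc 1 n := Finset.mem_Icc.mpr ⟨h1, hjn⟩
  have hEne : ∏ k ∈ (Icc 1 n).erase j, (q^j - q^k) ≠ 0 :=
    Finset.prod_ne_zero_iff.mpr fun k hk =>
      qpow_sub_ne q hq hden1 (by have := Finset.mem_erase.mp hk; omega)
  have hW : z ^ n * qPoch q (z⁻¹ * q) n
      = (z - q^j) * ∏ k ∈ (Icc 1 n).erase j, (z - q^k) := by
    rw [mul_comm, W_eq q z hz n, ← Finset.mul_prod_erase _ _ hmem]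
  have hA : ∏ k ∈ (Icc 1 n).erase j, (z - q^k)
      = Acoef q z n 1 j * ∏ k ∈ (Icc 1 n).erase j, (q^j - q^k) := by
    unfold Acoef
    rw [Finset.prod_div_distrib, div_mul_cancel₀ _ hEne]
  have hEsplit : (Icc 1 n).erase j = Icc 1 (j-1) ∪ Icc (j+1) n := by
    ext t; simp only [mem_erase, mem_Icc, mem_union]; omega
  have hdisj : Disjoint (Icc 1 (j-1)) (Icc (j+1) n) := by
    rw [Finset.disjoint_left]
    intro t ht1 ht2
    simp only [mem_Icc] at *
    omega
  have hD1 : ∏ k ∈ Icc 1 (j-1), (q^j - q^k)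
      = (-1)^(j-1) * q^(j*(j-1)/2) * qPoch q q (j-1) := by
    have := Dfact q hq hden1 (show j-1 < j by omega)
    rw [show (j-1)+1 = j by omega, show j-1-(j-1) = 0 by omega, qPoch_zero, div_one] at this
    exact this
  have hE1 : ∏ k ∈ Icc (j+1) n, (q^j - q^k) = q^(j*(n-j)) * qPoch q q (n-j) :=
    Efact q hjn
  have hB : qBinom q n j = qPoch q q n / (qPoch q q j * qPoch q q (n-j)) := by
    simp [qBinom, hjn]
  have hPj : qPoch q q j = qPoch q q (j-1) * (1 - q^j) := by
    have := qPoch_succ q q (j-1)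
    rw [show (j-1)+1 = j by omega] at this
    rw [this, show q * q^(j-1) = q^j by rw [← pow_succ']; congr 1; omega]
  have hz1 : q ^ (((j*(j+1)/2 : ℕ):ℤ) - (n:ℤ)*j) = q^(j*(j+1)/2) / q^(n*j) := by
    rw [show ((n:ℤ)*j) = ((n*j : ℕ):ℤ) by push_cast; ring, zpow_sub₀ hq, zpow_natCast,
      zpow_natCast]
  have hqq : q^(j*(j-1)/2) * q^(j*(n-j)) * q^(j*(j+1)/2) = q^(n*j) := by
    rw [← pow_add, ← pow_add]
    congr 1
    obtain ⟨s, rfl⟩ : ∃ s, n = j + s := ⟨n - j, by omega⟩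
    have h3 := tri j
    have h4 : j*(j+s-j) = j*s := by congr 1; omega
    have h5 : (j+s)*j = j*j + j*s := by ring
    omega
  have hs : ((-1:ℝ))^(j-1) * (-1)^(j-1) = 1 := by
    rw [← pow_add]
    exact Even.neg_one_pow ⟨j-1, rfl⟩
  have n1 := qPoch_q_ne q hden1 n
  have n2 := qPoch_q_ne q hden1 (j-1)
  have n3 := qPoch_q_ne q hden1 (n-j)
  have n4 := hden1 j h1
  have n5 : z - q^j ≠ 0 := hden2 j h1
  have n6 : (q:ℝ)^(n*j) ≠ 0 := pow_ne_zero _ hq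
  rw [hW, hA, hEsplit, Finset.prod_union hdisj, hD1, hE1, hB, hPj, hz1]
  have key : (z - q^j) * (Acoef q z n 1 j *
        ((-1)^(j-1) * q^(j*(j-1)/2) * qPoch q q (j-1) * (q^(j*(n-j)) * qPoch q q (n-j)))) /
        qPoch q q n *
      (qPoch q q n / (qPoch q q (j-1) * (1 - q^j) * qPoch q q (n-j)) * (-1)^(j-1) *
        (q^(j*(j+1)/2) / q^(n*j)) * qPoch q x j / (z - q^j))
      = Acoef q z n 1 j * qPoch q x j / (1 - q^j) *
          (((z - q^j)/(z - q^j)) * (qPoch q q n / qPoch q q n) *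
            (qPoch q q (j-1) / qPoch q q (j-1)) * (qPoch q q (n-j) / qPoch q q (n-j)) *
            (((-1:ℝ)^(j-1) * (-1)^(j-1)) *
              ((q^(j*(j-1)/2) * q^(j*(n-j)) * q^(j*(j+1)/2)) / q^(n*j)))) := by
    field_simp
  rw [key, hs, hqq, div_self n5, div_self n1, div_self n2, div_self n3, div_self n6]
  norm_num


/-- Corollary 3.2(b). -/
theorem cor32b (q z x : ℝ) (n l : ℕ) (hn : 0 < n) (hl : 0 < l) (hq : q ≠ 0) (hz : z ≠ 0)
    (hden1 : ∀ j : ℕ, 1 ≤ j → 1 - q ^ j ≠ 0)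
    (hden2 : ∀ j : ℕ, 1 ≤ j → z - q ^ j ≠ 0)
    (hden3 : ∀ j : ℕ, 1 ≤ j → 1 - z⁻¹ * q ^ j ≠ 0) :
    (∑ i ∈ Finset.Icc 1 n,
        (1 - x ^ i) * qPoch q (z⁻¹ * q) (i - 1) * z ^ (i - 1) / qPoch q q i *
          hPoly (varList (fun j => 1 / (z - q ^ j)) i n) (l - 1)) =
      z ^ n * qPoch q (z⁻¹ * q) n / qPoch q q n *
        ∑ i ∈ Finset.Icc 1 n,
          qBinom q n i * (-1) ^ (i - 1) * q ^ (((i * (i + 1) / 2 : ℕ) : ℤ) - (n : ℤ) * i) *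
            qPoch q x i / (z - q ^ i) ^ l := by
  have step1 : ∀ i ∈ Icc 1 n,
      (1 - x ^ i) * qPoch q (z⁻¹ * q) (i - 1) * z ^ (i - 1) / qPoch q q i *
          hPoly (varList (fun j => 1 / (z - q ^ j)) i n) (l - 1)
        = ∑ j ∈ Icc i n,
            (1 - x ^ i) * qPoch q (z⁻¹ * q) (i - 1) * z ^ (i - 1) / qPoch q q i *
              ((1/(z - q^j))^(l-1) * Acoef q z n i j) := by
    intro i hi
    rw [mem_Icc] at hi
    rw [expand q z n hq hden1 hden2 (l-1) i hi.1 hi.2, Finset.mul_sum]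
  rw [Finset.sum_congr rfl step1]
  have step2 :
      (∑ i ∈ Icc 1 n, ∑ j ∈ Icc i n,
        (1 - x ^ i) * qPoch q (z⁻¹ * q) (i - 1) * z ^ (i - 1) / qPoch q q i *
          ((1/(z - q^j))^(l-1) * Acoef q z n i j))
      = ∑ j ∈ Icc 1 n, ∑ i ∈ Icc 1 j,
        (1 - x ^ i) * qPoch q (z⁻¹ * q) (i - 1) * z ^ (i - 1) / qPoch q q i *
          ((1/(z - q^j))^(l-1) * Acoef q z n i j) := by
    simp only [← Finset.Ico_add_one_right_eq_Icc]
    exact Finset.sum_Ico_Ico_comm 1 (n+1) _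
  rw [step2]
  have step3 : ∀ j ∈ Icc 1 n,
      (∑ i ∈ Icc 1 j,
        (1 - x ^ i) * qPoch q (z⁻¹ * q) (i - 1) * z ^ (i - 1) / qPoch q q i *
          ((1/(z - q^j))^(l-1) * Acoef q z n i j))
      = z ^ n * qPoch q (z⁻¹ * q) n / qPoch q q n *
          (qBinom q n j * (-1) ^ (j - 1) * q ^ (((j * (j + 1) / 2 : ℕ) : ℤ) - (n : ℤ) * j) *
            qPoch q x j / (z - q ^ j) ^ l) := by
    intro j hj
    rw [mem_Icc] at hj
    have e1 : ∀ i ∈ Icc 1 j,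
        (1 - x ^ i) * qPoch q (z⁻¹ * q) (i - 1) * z ^ (i - 1) / qPoch q q i *
            ((1/(z - q^j))^(l-1) * Acoef q z n i j)
          = (1/(z - q^j))^(l-1) *
              ((1 - x ^ i) * qPoch q (z⁻¹ * q) (i - 1) * z ^ (i - 1) / qPoch q q i *
                Acoef q z n i j) := by
      intro i _
      ring
    rw [Finset.sum_congr rfl e1, ← Finset.mul_sum,
      sumLHS q z x n hq hz hden1 hden2 hj.1 hj.2,
      ← sumRHS q z x n hq hz hden1 hden2 hj.1 hj.2]
    have hzj : z - q^j ≠ 0 := hden2 j hj.1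
    have e2 : ((1:ℝ)/(z - q^j))^(l-1) * (1/(z-q^j)) = 1/(z-q^j)^l := by
      rw [div_pow, one_pow, div_mul_div_comm, one_mul, ← pow_succ,
        show l-1+1 = l by omega]
    field_simp
    have e3 : (z - q^j)^(l-1) * (z-q^j) = (z-q^j)^l := by
      rw [← pow_succ, show l-1+1 = l by omega]
    have e4 : (1/(z-q^j))^(l-1) * (z-q^j)^l = z - q^j := by
      rw [← e3, ← mul_assoc, ← mul_pow, one_div_mul_cancel hzj, one_pow, one_mul]
    linear_combination (qPoch q (q / z) n * qBinom q n j * qPoch q x j / qPoch q q n) * e4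
  rw [Finset.sum_congr rfl step3, ← Finset.mul_sum]
end

section
/- For a positive integer n and parameters w, y, q with denominators nonzero: (q;q)_n/(yq;q)_n · ∑_{i=1}^n w^i y^{n-i} (yq;q)_{i-1}/(q;q)_i = ∑_{i=1}^n [n choose i]_q (-1)^{i-1} q^{binom(i+1,2) - in} (1 - (w;q)_i)/(1 - yq^i). -/
namespace FL

lemma poch_succ (q a : ℝ) (n : ℕ) : qPoch q a (n + 1) = qPoch q a n * (1 - a * q ^ n) :=
  Finset.prod_range_succ _ _

lemma poch_zero (q a : ℝ) : qPoch q a 0 = 1 := Finset.prod_range_zero _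

def bb (i : ℕ) : ℕ := i * (i + 1) / 2

lemma bb_succ (i : ℕ) : bb (i + 1) = bb i + (i + 1) := by
  unfold bb
  have h : (i + 1) * (i + 1 + 1) = i * (i + 1) + 2 * (i + 1) := by ring
  rw [h, Nat.add_mul_div_left _ _ (by norm_num : (0:ℕ) < 2)]

variable {q w y : ℝ}

lemma hP (hden1 : ∀ j : ℕ, 1 ≤ j → 1 - q ^ j ≠ 0) : ∀ m, qPoch q q m ≠ 0 := by
  intro m
  induction m with
  | zero => rw [poch_zero]; norm_num
  | succ k ih =>
      rw [poch_succ]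
      refine mul_ne_zero ih ?_
      have := hden1 (k + 1) (by omega)
      rwa [pow_succ'] at this

lemma hQ (hden2 : ∀ j : ℕ, 1 ≤ j → 1 - y * q ^ j ≠ 0) : ∀ m, qPoch q (y * q) m ≠ 0 := by
  intro m
  induction m with
  | zero => rw [poch_zero]; norm_num
  | succ k ih =>
      rw [poch_succ]
      refine mul_ne_zero ih ?_
      have := hden2 (k + 1) (by omega)
      rw [pow_succ'] at this
      rwa [mul_assoc]

lemma qBinom_of_le {n i : ℕ} (h : i ≤ n) :
    qBinom q n i = qPoch q q n / (qPoch q q i * qPoch q q (n - i)) := if_pos h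

lemma qBinom_of_gt {n i : ℕ} (h : n < i) : qBinom q n i = 0 := if_neg (by omega)

lemma qBinom_zero (hden1 : ∀ j : ℕ, 1 ≤ j → 1 - q ^ j ≠ 0) (n : ℕ) : qBinom q n 0 = 1 := by
  rw [qBinom_of_le (Nat.zero_le n), poch_zero, Nat.sub_zero, one_mul,
    div_self (hP hden1 n)]

lemma qBinom_self (hden1 : ∀ j : ℕ, 1 ≤ j → 1 - q ^ j ≠ 0) (n : ℕ) : qBinom q n n = 1 := by
  rw [qBinom_of_le le_rfl, Nat.sub_self, poch_zero, mul_one, div_self (hP hden1 n)]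

/-- Pascal 2 : [n+1,i] = q^i [n,i] + [n,i-1] for 1 ≤ i -/
lemma pascal2 (hden1 : ∀ j : ℕ, 1 ≤ j → 1 - q ^ j ≠ 0) {n i : ℕ} (hi : 1 ≤ i) :
    qBinom q (n + 1) i = q ^ i * qBinom q n i + qBinom q n (i - 1) := by
  obtain ⟨i', rfl⟩ : ∃ i', i = i' + 1 := ⟨i - 1, by omega⟩
  simp only [Nat.add_sub_cancel]
  rcases le_or_gt (i' + 1) n with h | h
  · obtain ⟨m, rfl⟩ : ∃ m, n = i' + 1 + m := ⟨n - (i' + 1), by omega⟩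
    rw [qBinom_of_le (by omega), qBinom_of_le (by omega), qBinom_of_le (by omega)]
    rw [show i' + 1 + m + 1 - (i' + 1) = m + 1 by omega,
      show i' + 1 + m - (i' + 1) = m by omega,
      show i' + 1 + m - i' = m + 1 by omega]
    rw [show i' + 1 + m + 1 = (i' + 1 + m) + 1 by ring, poch_succ q q (i' + 1 + m),
      poch_succ q q m, poch_succ q q i']
    have h1 := hP hden1 (i' + 1 + m)
    have h2 := hP hden1 i'
    have h3 := hP hden1 m
    have h4 : 1 - q * q ^ i' ≠ 0 := by
      have := hden1 (i' + 1) (by omega); rwa [pow_succ'] at this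
    have h5 : 1 - q * q ^ m ≠ 0 := by
      have := hden1 (m + 1) (by omega); rwa [pow_succ'] at this
    field_simp
    ring
  · rcases eq_or_lt_of_le (by omega : n + 1 ≤ i' + 1) with h2 | h2
    · obtain rfl : i' = n := by omega
      rw [qBinom_self hden1, show qBinom q i' (i' + 1) = 0 from qBinom_of_gt (by omega),
        qBinom_self hden1]
      ring
    · rw [qBinom_of_gt (by omega), qBinom_of_gt (by omega), qBinom_of_gt (by omega)]
      ring

/-- Pascal 1 : [n+1,i] = [n,i] + q^(n+1-i) [n,i-1] for 1 ≤ i -/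
lemma pascal1 (hden1 : ∀ j : ℕ, 1 ≤ j → 1 - q ^ j ≠ 0) {n i : ℕ} (hi : 1 ≤ i) :
    qBinom q (n + 1) i = qBinom q n i + q ^ (n + 1 - i) * qBinom q n (i - 1) := by
  obtain ⟨i', rfl⟩ : ∃ i', i = i' + 1 := ⟨i - 1, by omega⟩
  simp only [Nat.add_sub_cancel]
  rcases le_or_gt (i' + 1) n with h | h
  · obtain ⟨m, rfl⟩ : ∃ m, n = i' + 1 + m := ⟨n - (i' + 1), by omega⟩
    rw [qBinom_of_le (by omega), qBinom_of_le (by omega), qBinom_of_le (by omega)]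
    rw [show i' + 1 + m + 1 - (i' + 1) = m + 1 by omega,
      show i' + 1 + m - (i' + 1) = m by omega,
      show i' + 1 + m - i' = m + 1 by omega]
    rw [show i' + 1 + m + 1 = (i' + 1 + m) + 1 by ring, poch_succ q q (i' + 1 + m),
      poch_succ q q m, poch_succ q q i']
    have h1 := hP hden1 (i' + 1 + m)
    have h2 := hP hden1 i'
    have h3 := hP hden1 m
    have h4 : 1 - q * q ^ i' ≠ 0 := by
      have := hden1 (i' + 1) (by omega); rwa [pow_succ'] at this
    have h5 : 1 - q * q ^ m ≠ 0 := by
      have := hden1 (m + 1) (by omega); rwa [pow_succ'] at this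
    field_simp
    ring
  · rcases eq_or_lt_of_le (by omega : n + 1 ≤ i' + 1) with h2 | h2
    · obtain rfl : i' = n := by omega
      rw [qBinom_self hden1, show qBinom q i' (i' + 1) = 0 from qBinom_of_gt (by omega),
        qBinom_self hden1, show i' + 1 - (i' + 1) = 0 by omega]
      ring
    · rw [qBinom_of_gt (by omega), qBinom_of_gt (by omega), qBinom_of_gt (by omega)]
      ring

/-- [n,j] (1 - q^(n-j)) = [n,j+1] (1 - q^(j+1)) for j ≤ n -/
lemma qBinom_mul (hden1 : ∀ j : ℕ, 1 ≤ j → 1 - q ^ j ≠ 0) {n j : ℕ} (h : j ≤ n) :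
    qBinom q n j * (1 - q ^ (n - j)) = qBinom q n (j + 1) * (1 - q ^ (j + 1)) := by
  rcases eq_or_lt_of_le h with rfl | h
  · rw [Nat.sub_self, show qBinom q j (j + 1) = 0 from qBinom_of_gt (by omega)]
    norm_num
  · obtain ⟨m, rfl⟩ : ∃ m, n = j + 1 + m := ⟨n - (j + 1), by omega⟩
    rw [qBinom_of_le (by omega), qBinom_of_le (by omega),
      show j + 1 + m - j = m + 1 by omega, show j + 1 + m - (j + 1) = m by omega,
      poch_succ q q m, poch_succ q q j]
    have h1 := hP hden1 (j + 1 + m)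
    have h2 := hP hden1 j
    have h3 := hP hden1 m
    have h4 : 1 - q * q ^ j ≠ 0 := by
      have := hden1 (j + 1) (by omega); rwa [pow_succ'] at this
    have h5 : 1 - q * q ^ m ≠ 0 := by
      have := hden1 (m + 1) (by omega); rwa [pow_succ'] at this
    rw [pow_succ' q m, pow_succ' q j]
    field_simp

lemma lemF (hq : q ≠ 0) (hden1 : ∀ j : ℕ, 1 ≤ j → 1 - q ^ j ≠ 0) (n : ℕ) :
    ∑ j ∈ Finset.range (n + 1),
      qBinom q n j * (-1 : ℝ) ^ j * q ^ ((bb j : ℤ) - (j : ℤ) * n) * qPoch q w j = w ^ n := by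
  induction n with
  | zero =>
      rw [Finset.sum_range_one]
      simp [qBinom_zero hden1, poch_zero, bb]
  | succ n ih =>
      have hsplit : ∀ i ∈ Finset.range (n + 2),
          qBinom q (n + 1) i * (-1 : ℝ) ^ i * q ^ ((bb i : ℤ) - (i : ℤ) * (n + 1 : ℕ)) * qPoch q w i
          = qBinom q n i * (-1 : ℝ) ^ i * q ^ ((bb i : ℤ) - (i : ℤ) * (n + 1 : ℕ)) * qPoch q w i
            + (if i = 0 then 0 else
                q ^ (n + 1 - i) * qBinom q n (i - 1) * (-1 : ℝ) ^ i *
                  q ^ ((bb i : ℤ) - (i : ℤ) * (n + 1 : ℕ)) * qPoch q w i) := by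
        intro i _
        match i with
        | 0 => simp [qBinom_zero hden1]
        | (j + 1) =>
            rw [pascal1 hden1 (by omega), if_neg (by omega)]
            ring
      rw [show (n + 1 + 1) = n + 2 by rfl, Finset.sum_congr rfl hsplit, Finset.sum_add_distrib]
      have hA : ∑ i ∈ Finset.range (n + 2),
          qBinom q n i * (-1 : ℝ) ^ i * q ^ ((bb i : ℤ) - (i : ℤ) * (n + 1 : ℕ)) * qPoch q w i
          = ∑ i ∈ Finset.range (n + 1),
          qBinom q n i * (-1 : ℝ) ^ i * q ^ ((bb i : ℤ) - (i : ℤ) * (n + 1 : ℕ)) * qPoch q w i := by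
        rw [Finset.sum_range_succ, show qBinom q n (n + 1) = 0 from qBinom_of_gt (by omega)]
        simp
      have hB : ∑ i ∈ Finset.range (n + 2),
          (if i = 0 then (0:ℝ) else
                q ^ (n + 1 - i) * qBinom q n (i - 1) * (-1 : ℝ) ^ i *
                  q ^ ((bb i : ℤ) - (i : ℤ) * (n + 1 : ℕ)) * qPoch q w i)
          = ∑ j ∈ Finset.range (n + 1),
                q ^ (n + 1 - (j + 1)) * qBinom q n j * (-1 : ℝ) ^ (j + 1) *
                  q ^ ((bb (j + 1) : ℤ) - ((j + 1 : ℕ) : ℤ) * (n + 1 : ℕ)) * qPoch q w (j + 1) := by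
        rw [Finset.sum_range_succ']
        simp
      rw [hA, hB, ← Finset.sum_add_distrib]
      have hterm : ∀ j ∈ Finset.range (n + 1),
          qBinom q n j * (-1 : ℝ) ^ j * q ^ ((bb j : ℤ) - (j : ℤ) * (n + 1 : ℕ)) * qPoch q w j
          + q ^ (n + 1 - (j + 1)) * qBinom q n j * (-1 : ℝ) ^ (j + 1) *
              q ^ ((bb (j + 1) : ℤ) - ((j + 1 : ℕ) : ℤ) * (n + 1 : ℕ)) * qPoch q w (j + 1)
          = w * (qBinom q n j * (-1 : ℝ) ^ j * q ^ ((bb j : ℤ) - (j : ℤ) * n) * qPoch q w j) := by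
        intro j hj
        have hjn : j ≤ n := by simpa using Nat.lt_succ_iff.mp (Finset.mem_range.mp hj)
        rw [poch_succ, show n + 1 - (j + 1) = n - j by omega]
        have e1 : (q : ℝ) ^ (n - j) * q ^ ((bb (j + 1) : ℤ) - ((j + 1 : ℕ) : ℤ) * (n + 1 : ℕ))
            = q ^ ((bb j : ℤ) - (j : ℤ) * (n + 1 : ℕ)) := by
          rw [← zpow_natCast q (n - j), ← zpow_add₀ hq]
          congr 1
          push_cast [bb_succ, Nat.cast_sub hjn]
          ring
        have e2 : (q : ℝ) ^ ((bb j : ℤ) - (j : ℤ) * (n + 1 : ℕ)) * q ^ (j : ℕ)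
            = q ^ ((bb j : ℤ) - (j : ℤ) * n) := by
          rw [← zpow_natCast q j, ← zpow_add₀ hq]
          congr 1
          push_cast
          ring
        linear_combination (-(qBinom q n j) * (-1 : ℝ) ^ j * qPoch q w j * (1 - w * q ^ j)) * e1
          + (qBinom q n j * (-1 : ℝ) ^ j * qPoch q w j * w) * e2
      rw [Finset.sum_congr rfl hterm, ← Finset.mul_sum, ih, ← pow_succ']

noncomputable def TT (q w y : ℝ) (n : ℕ) : ℝ :=
  ∑ i ∈ Finset.range (n + 1),
    qBinom q n i * (-1 : ℝ) ^ (i - 1) * q ^ ((bb i : ℤ) - (i : ℤ) * n) *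
      (1 - qPoch q w i) / (1 - y * q ^ i)

lemma recT (hq : q ≠ 0) (hden1 : ∀ j : ℕ, 1 ≤ j → 1 - q ^ j ≠ 0)
    (hden2 : ∀ j : ℕ, 1 ≤ j → 1 - y * q ^ j ≠ 0) (n : ℕ) :
    TT q w y (n + 1) = y * (1 - q ^ (n + 1)) / (1 - y * q ^ (n + 1)) * TT q w y n
      + w ^ (n + 1) / (1 - y * q ^ (n + 1)) := by
  have d2 : (1 : ℝ) - y * q ^ (n + 1) ≠ 0 := hden2 (n + 1) (by omega)
  have hsplit : ∀ i ∈ Finset.range (n + 2),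
      qBinom q (n + 1) i * (-1 : ℝ) ^ (i - 1) * q ^ ((bb i : ℤ) - (i : ℤ) * (n + 1 : ℕ)) *
        (1 - qPoch q w i) / (1 - y * q ^ i)
      = qBinom q n i * (-1 : ℝ) ^ (i - 1) * q ^ ((bb i : ℤ) - (i : ℤ) * (n : ℕ)) *
          (1 - qPoch q w i) / (1 - y * q ^ i)
        + (if i = 0 then 0 else
            qBinom q n (i - 1) * (-1 : ℝ) ^ (i - 1) * q ^ ((bb i : ℤ) - (i : ℤ) * (n + 1 : ℕ)) *
              (1 - qPoch q w i) / (1 - y * q ^ i)) := by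
    intro i _
    match i with
    | 0 => simp [poch_zero]
    | (j + 1) =>
        rw [pascal2 hden1 (by omega), if_neg (by omega)]
        simp only [Nat.add_sub_cancel]
        have e : (q : ℝ) ^ (j + 1) * q ^ ((bb (j + 1) : ℤ) - ((j + 1 : ℕ) : ℤ) * (n + 1 : ℕ))
            = q ^ ((bb (j + 1) : ℤ) - ((j + 1 : ℕ) : ℤ) * (n : ℕ)) := by
          rw [← zpow_natCast q (j + 1), ← zpow_add₀ hq]
          congr 1
          push_cast
          ring
        rw [← add_div]
        congr 1
        linear_combination (qBinom q n (j + 1) * (-1 : ℝ) ^ j * (1 - qPoch q w (j + 1))) * e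
  have step1 : TT q w y (n + 1)
      = TT q w y n + ∑ j ∈ Finset.range (n + 1),
          qBinom q n j * (-1 : ℝ) ^ j * q ^ ((bb (j + 1) : ℤ) - ((j + 1 : ℕ) : ℤ) * (n + 1 : ℕ)) *
            (1 - qPoch q w (j + 1)) / (1 - y * q ^ (j + 1)) := by
    rw [TT, show (n + 1 + 1) = n + 2 by rfl, Finset.sum_congr rfl hsplit,
      Finset.sum_add_distrib]
    congr 1
    · rw [Finset.sum_range_succ, show qBinom q n (n + 1) = 0 from qBinom_of_gt (by omega), TT]
      simp
    · rw [Finset.sum_range_succ']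
      simp
  rw [step1]
  have hT : TT q w y n = ∑ j ∈ Finset.range (n + 1),
      qBinom q n (j + 1) * (-1 : ℝ) ^ j * q ^ ((bb (j + 1) : ℤ) - ((j + 1 : ℕ) : ℤ) * (n : ℕ)) *
        (1 - qPoch q w (j + 1)) / (1 - y * q ^ (j + 1)) := by
    rw [TT, Finset.sum_range_succ']
    rw [Finset.sum_range_succ
      (fun j => qBinom q n (j + 1) * (-1 : ℝ) ^ j *
        q ^ ((bb (j + 1) : ℤ) - ((j + 1 : ℕ) : ℤ) * (n : ℕ)) *
        (1 - qPoch q w (j + 1)) / (1 - y * q ^ (j + 1))) n]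
    rw [show qBinom q n (n + 1) = 0 from qBinom_of_gt (by omega)]
    simp [poch_zero]
  have claim : ∀ j ∈ Finset.range (n + 1),
      qBinom q n j * (-1 : ℝ) ^ j * q ^ ((bb (j + 1) : ℤ) - ((j + 1 : ℕ) : ℤ) * (n + 1 : ℕ)) *
          (1 - qPoch q w (j + 1)) / (1 - y * q ^ (j + 1))
        - (y - 1) / (1 - y * q ^ (n + 1)) *
          (qBinom q n (j + 1) * (-1 : ℝ) ^ j *
            q ^ ((bb (j + 1) : ℤ) - ((j + 1 : ℕ) : ℤ) * (n : ℕ)) *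
            (1 - qPoch q w (j + 1)) / (1 - y * q ^ (j + 1)))
      = (qBinom q n j * (-1 : ℝ) ^ j * q ^ ((bb j : ℤ) - (j : ℤ) * (n : ℕ) - (j : ℤ))
          - qBinom q n (j + 1) * (-1 : ℝ) ^ (j + 1) *
            q ^ ((bb (j + 1) : ℤ) - ((j + 1 : ℕ) : ℤ) * (n : ℕ) - ((j + 1 : ℕ) : ℤ))) *
          (1 - qPoch q w (j + 1)) / (1 - y * q ^ (n + 1)) := by
    intro j hj
    have hjn : j ≤ n := by simpa using Nat.lt_succ_iff.mp (Finset.mem_range.mp hj)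
    have hmul := qBinom_mul hden1 hjn
    have d1 : (1 : ℝ) - y * q ^ (j + 1) ≠ 0 := hden2 (j + 1) (by omega)
    have e4 : (q : ℝ) ^ (n - j) * q ^ (j + 1) = q ^ (n + 1) := by
      rw [← pow_add]; congr 1; omega
    have f2 : (q : ℝ) ^ ((bb (j + 1) : ℤ) - ((j + 1 : ℕ) : ℤ) * (n + 1 : ℕ))
        = q ^ ((bb (j + 1) : ℤ) - ((j + 1 : ℕ) : ℤ) * (n : ℕ) - ((j + 1 : ℕ) : ℤ)) := by
      congr 1; push_cast; ring
    have f3 : (q : ℝ) ^ ((bb (j + 1) : ℤ) - ((j + 1 : ℕ) : ℤ) * (n : ℕ))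
        = q ^ ((bb (j + 1) : ℤ) - ((j + 1 : ℕ) : ℤ) * (n : ℕ) - ((j + 1 : ℕ) : ℤ)) *
            q ^ (j + 1 : ℕ) := by
      rw [← zpow_natCast q (j + 1), ← zpow_add₀ hq]
      congr 1; push_cast; ring
    have f1 : (q : ℝ) ^ ((bb (j + 1) : ℤ) - ((j + 1 : ℕ) : ℤ) * (n : ℕ) - ((j + 1 : ℕ) : ℤ)) *
          q ^ (n - j)
        = q ^ ((bb j : ℤ) - (j : ℤ) * (n : ℕ) - (j : ℤ)) := by
      rw [← zpow_natCast q (n - j), ← zpow_add₀ hq]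
      congr 1
      push_cast [bb_succ, Nat.cast_sub hjn]
      ring
    rw [f2, f3]
    have key : qBinom q n j * (-1 : ℝ) ^ j *
          q ^ ((bb (j + 1) : ℤ) - ((j + 1 : ℕ) : ℤ) * (n : ℕ) - ((j + 1 : ℕ) : ℤ)) *
          (1 - qPoch q w (j + 1)) * (1 - y * q ^ (n + 1))
        - (y - 1) * (qBinom q n (j + 1) * (-1 : ℝ) ^ j *
            (q ^ ((bb (j + 1) : ℤ) - ((j + 1 : ℕ) : ℤ) * (n : ℕ) - ((j + 1 : ℕ) : ℤ)) *
              q ^ (j + 1 : ℕ)) * (1 - qPoch q w (j + 1)))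
        = (qBinom q n j * (-1 : ℝ) ^ j * q ^ ((bb j : ℤ) - (j : ℤ) * (n : ℕ) - (j : ℤ))
            - qBinom q n (j + 1) * (-1 : ℝ) ^ (j + 1) *
              q ^ ((bb (j + 1) : ℤ) - ((j + 1 : ℕ) : ℤ) * (n : ℕ) - ((j + 1 : ℕ) : ℤ))) *
            (1 - qPoch q w (j + 1)) * (1 - y * q ^ (j + 1)) := by
      linear_combination
        ((-1 : ℝ) ^ j * (1 - qPoch q w (j + 1)) *
          q ^ ((bb (j + 1) : ℤ) - ((j + 1 : ℕ) : ℤ) * (n : ℕ) - ((j + 1 : ℕ) : ℤ))) * hmul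
        + (qBinom q n j * y * (-1 : ℝ) ^ j * (1 - qPoch q w (j + 1)) *
          q ^ ((bb (j + 1) : ℤ) - ((j + 1 : ℕ) : ℤ) * (n : ℕ) - ((j + 1 : ℕ) : ℤ))) * e4
        + (qBinom q n j * (-1 : ℝ) ^ j * (1 - qPoch q w (j + 1)) * (1 - y * q ^ (j + 1))) * f1
    push_cast at key ⊢
    field_simp
    linear_combination key
  have tele : ∑ j ∈ Finset.range (n + 1),
      (qBinom q n j * (-1 : ℝ) ^ j * q ^ ((bb j : ℤ) - (j : ℤ) * (n : ℕ) - (j : ℤ))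
        - qBinom q n (j + 1) * (-1 : ℝ) ^ (j + 1) *
          q ^ ((bb (j + 1) : ℤ) - ((j + 1 : ℕ) : ℤ) * (n : ℕ) - ((j + 1 : ℕ) : ℤ))) *
        (1 - qPoch q w (j + 1))
      = w * w ^ n := by
    have hshift : ∑ j ∈ Finset.range (n + 1),
        (qBinom q n (j + 1) * (-1 : ℝ) ^ (j + 1) *
          q ^ ((bb (j + 1) : ℤ) - ((j + 1 : ℕ) : ℤ) * (n : ℕ) - ((j + 1 : ℕ) : ℤ))) *
          (1 - qPoch q w (j + 1))
        = ∑ j ∈ Finset.range (n + 1),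
        (qBinom q n j * (-1 : ℝ) ^ j *
          q ^ ((bb j : ℤ) - (j : ℤ) * (n : ℕ) - (j : ℤ))) * (1 - qPoch q w j) := by
      have h1 := Finset.sum_range_succ'
        (fun m => (qBinom q n m * (-1 : ℝ) ^ m *
          q ^ ((bb m : ℤ) - (m : ℤ) * (n : ℕ) - (m : ℤ))) * (1 - qPoch q w m)) (n + 1)
      have h2 := Finset.sum_range_succ
        (fun m => (qBinom q n m * (-1 : ℝ) ^ m *
          q ^ ((bb m : ℤ) - (m : ℤ) * (n : ℕ) - (m : ℤ))) * (1 - qPoch q w m)) (n + 1)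
      simp only [show qBinom q n (n + 1) = 0 from qBinom_of_gt (by omega), poch_zero] at h1 h2
      simp only [Nat.cast_ofNat, CharP.cast_eq_zero] at h1 h2
      rw [h2] at h1
      simpa using h1.symm
    have expand : ∀ j ∈ Finset.range (n + 1),
        (qBinom q n j * (-1 : ℝ) ^ j * q ^ ((bb j : ℤ) - (j : ℤ) * (n : ℕ) - (j : ℤ))) *
            (1 - qPoch q w (j + 1))
          - (qBinom q n j * (-1 : ℝ) ^ j *
              q ^ ((bb j : ℤ) - (j : ℤ) * (n : ℕ) - (j : ℤ))) * (1 - qPoch q w j)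
        = w * (qBinom q n j * (-1 : ℝ) ^ j * q ^ ((bb j : ℤ) - (j : ℤ) * n) * qPoch q w j) := by
      intro j hj
      have e5 : (q : ℝ) ^ ((bb j : ℤ) - (j : ℤ) * (n : ℕ) - (j : ℤ)) * q ^ (j : ℕ)
          = q ^ ((bb j : ℤ) - (j : ℤ) * n) := by
        rw [← zpow_natCast q j, ← zpow_add₀ hq]
        congr 1; push_cast; ring
      rw [poch_succ]
      linear_combination (qBinom q n j * (-1 : ℝ) ^ j * qPoch q w j * w) * e5
    calc ∑ j ∈ Finset.range (n + 1),
        (qBinom q n j * (-1 : ℝ) ^ j * q ^ ((bb j : ℤ) - (j : ℤ) * (n : ℕ) - (j : ℤ))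
          - qBinom q n (j + 1) * (-1 : ℝ) ^ (j + 1) *
            q ^ ((bb (j + 1) : ℤ) - ((j + 1 : ℕ) : ℤ) * (n : ℕ) - ((j + 1 : ℕ) : ℤ))) *
          (1 - qPoch q w (j + 1))
        = ∑ j ∈ Finset.range (n + 1),
          ((qBinom q n j * (-1 : ℝ) ^ j * q ^ ((bb j : ℤ) - (j : ℤ) * (n : ℕ) - (j : ℤ))) *
            (1 - qPoch q w (j + 1))
          - (qBinom q n (j + 1) * (-1 : ℝ) ^ (j + 1) *
            q ^ ((bb (j + 1) : ℤ) - ((j + 1 : ℕ) : ℤ) * (n : ℕ) - ((j + 1 : ℕ) : ℤ))) *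
            (1 - qPoch q w (j + 1))) := by
          apply Finset.sum_congr rfl; intro j _; ring
      _ = ∑ j ∈ Finset.range (n + 1),
          ((qBinom q n j * (-1 : ℝ) ^ j * q ^ ((bb j : ℤ) - (j : ℤ) * (n : ℕ) - (j : ℤ))) *
            (1 - qPoch q w (j + 1))
          - (qBinom q n j * (-1 : ℝ) ^ j *
            q ^ ((bb j : ℤ) - (j : ℤ) * (n : ℕ) - (j : ℤ))) * (1 - qPoch q w j)) := by
          rw [Finset.sum_sub_distrib, Finset.sum_sub_distrib, hshift]
      _ = ∑ j ∈ Finset.range (n + 1),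
          w * (qBinom q n j * (-1 : ℝ) ^ j * q ^ ((bb j : ℤ) - (j : ℤ) * n) * qPoch q w j) :=
          Finset.sum_congr rfl expand
      _ = w * w ^ n := by rw [← Finset.mul_sum, lemF hq hden1 n]
  have hB2 : ∑ j ∈ Finset.range (n + 1),
      qBinom q n j * (-1 : ℝ) ^ j * q ^ ((bb (j + 1) : ℤ) - ((j + 1 : ℕ) : ℤ) * (n + 1 : ℕ)) *
        (1 - qPoch q w (j + 1)) / (1 - y * q ^ (j + 1))
      = (y - 1) / (1 - y * q ^ (n + 1)) * TT q w y n + w ^ (n + 1) / (1 - y * q ^ (n + 1)) := by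
    have h := Finset.sum_congr rfl claim
    rw [Finset.sum_sub_distrib, ← Finset.mul_sum, ← hT] at h
    have h2 : ∑ j ∈ Finset.range (n + 1),
        (qBinom q n j * (-1 : ℝ) ^ j * q ^ ((bb j : ℤ) - (j : ℤ) * (n : ℕ) - (j : ℤ))
          - qBinom q n (j + 1) * (-1 : ℝ) ^ (j + 1) *
            q ^ ((bb (j + 1) : ℤ) - ((j + 1 : ℕ) : ℤ) * (n : ℕ) - ((j + 1 : ℕ) : ℤ))) *
          (1 - qPoch q w (j + 1)) / (1 - y * q ^ (n + 1))
        = w ^ (n + 1) / (1 - y * q ^ (n + 1)) := by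
      rw [← Finset.sum_div, tele, pow_succ' w n]
    rw [h2] at h
    linarith [h]
  rw [hB2, hT]
  rw [← hT]
  field_simp
  ring


lemma recL (hden1 : ∀ j : ℕ, 1 ≤ j → 1 - q ^ j ≠ 0)
    (hden2 : ∀ j : ℕ, 1 ≤ j → 1 - y * q ^ j ≠ 0) (n : ℕ) :
    qPoch q q (n + 1) / qPoch q (y * q) (n + 1) *
        ∑ i ∈ Finset.Icc 1 (n + 1), w ^ i * y ^ (n + 1 - i) * qPoch q (y * q) (i - 1) / qPoch q q i
    = y * (1 - q ^ (n + 1)) / (1 - y * q ^ (n + 1)) *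
        (qPoch q q n / qPoch q (y * q) n *
          ∑ i ∈ Finset.Icc 1 n, w ^ i * y ^ (n - i) * qPoch q (y * q) (i - 1) / qPoch q q i)
      + w ^ (n + 1) / (1 - y * q ^ (n + 1)) := by
  have hsum : ∑ i ∈ Finset.Icc 1 (n + 1), w ^ i * y ^ (n + 1 - i) * qPoch q (y * q) (i - 1) / qPoch q q i
      = y * (∑ i ∈ Finset.Icc 1 n, w ^ i * y ^ (n - i) * qPoch q (y * q) (i - 1) / qPoch q q i)
        + w ^ (n + 1) * qPoch q (y * q) n / qPoch q q (n + 1) := by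
    rw [Finset.sum_Icc_succ_top (by omega : 1 ≤ n + 1), Finset.mul_sum]
    congr 1
    · apply Finset.sum_congr rfl
      intro i hi
      have h1 : 1 ≤ i ∧ i ≤ n := by simpa using Finset.mem_Icc.mp hi
      rw [show n + 1 - i = (n - i) + 1 by omega, pow_succ]
      ring
    · rw [show n + 1 - (n + 1) = 0 by omega, show n + 1 - 1 = n by omega, pow_zero]
      ring
  rw [hsum, poch_succ q q n, poch_succ q (y * q) n]
  have h1 := hP hden1 n
  have h2 := hQ hden2 n
  have h3 : (1 : ℝ) - q * q ^ n ≠ 0 := by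
    have := hden1 (n + 1) (by omega); rwa [pow_succ'] at this
  have h4 : (1 : ℝ) - y * (q * q ^ n) ≠ 0 := by
    have := hden2 (n + 1) (by omega); rwa [pow_succ'] at this
  have h5 : (1 : ℝ) - y * q * q ^ n ≠ 0 := by rwa [mul_assoc]
  rw [pow_succ' q n]
  have h6 : qPoch q (q * y) n ≠ 0 := by rwa [mul_comm q y]
  have h7 : (1 : ℝ) - q * q ^ n * y ≠ 0 := by rw [mul_comm]; exact h4
  field_simp

end FL

/-- The Fu–Lascoux identity (3.5). -/
theorem fu_lascoux_35 (q w y : ℝ) (n : ℕ) (hn : 0 < n) (hq : q ≠ 0)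
    (hden1 : ∀ j : ℕ, 1 ≤ j → 1 - q ^ j ≠ 0)
    (hden2 : ∀ j : ℕ, 1 ≤ j → 1 - y * q ^ j ≠ 0) :
    qPoch q q n / qPoch q (y * q) n *
        ∑ i ∈ Finset.Icc 1 n, w ^ i * y ^ (n - i) * qPoch q (y * q) (i - 1) / qPoch q q i =
      ∑ i ∈ Finset.Icc 1 n,
        qBinom q n i * (-1) ^ (i - 1) * q ^ (((i * (i + 1) / 2 : ℕ) : ℤ) - (i : ℤ) * n) *
          (1 - qPoch q w i) / (1 - y * q ^ i) := by
  have hmain : ∀ m : ℕ, qPoch q q m / qPoch q (y * q) m *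
      ∑ i ∈ Finset.Icc 1 m, w ^ i * y ^ (m - i) * qPoch q (y * q) (i - 1) / qPoch q q i
      = FL.TT q w y m := by
    intro m
    induction m with
    | zero =>
        rw [show Finset.Icc 1 0 = (∅ : Finset ℕ) from Finset.Icc_eq_empty (by omega)]
        rw [FL.TT, Finset.sum_range_one]
        simp [FL.poch_zero]
    | succ m ih => rw [FL.recL hden1 hden2 m, FL.recT hq hden1 hden2 m, ih]
  rw [hmain n]
  have hins : Finset.range (n + 1) = insert 0 (Finset.Icc 1 n) := by
    ext a
    simp only [Finset.mem_range, Finset.mem_insert, Finset.mem_Icc]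
    omega
  rw [FL.TT, hins, Finset.sum_insert (by simp)]
  have h0 : qBinom q n 0 * (-1 : ℝ) ^ (0 - 1) * q ^ ((FL.bb 0 : ℤ) - ((0 : ℕ) : ℤ) * n) *
      (1 - qPoch q w 0) / (1 - y * q ^ 0) = 0 := by
    simp [FL.poch_zero]
  rw [h0, zero_add]
  apply Finset.sum_congr rfl
  intro i _
  simp only [FL.bb]
end

section
/- For positive integers i, k and parameter z, q with denominators nonzero: ∑_{i ≥ i_1 ≥ ... ≥ i_k ≥ 1} (zq^{-k};q)_{i_k} ∏_{j=1}^k q^{i_j}/(1-q^{i_j}) = ∑_{r=1}^i [i choose r]_q (-1)^{r-1} q^{binom(r,2) + rk} (1 - z^r q^{-rk})/(1-q^r)^k. -/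
/-- Sum over chains `top ≥ i₁ ≥ ⋯ ≥ i_m ≥ 1` of `(z q^{-k};q)_{i_m} ∏ q^{i_j}/(1-q^{i_j})`. -/
noncomputable def chainSum (q z : ℝ) (k : ℕ) : ℕ → ℕ → ℝ
  | 0, top => qPoch q (z * q ^ (-(k : ℤ))) top
  | m + 1, top => ∑ i ∈ Finset.Icc 1 top, q ^ i / (1 - q ^ i) * chainSum q z k m i

namespace Eq45Aux

variable {q : ℝ}

lemma qPoch_succ (a : ℝ) (n : ℕ) : qPoch q a (n + 1) = qPoch q a n * (1 - a * q ^ n) :=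
  Finset.prod_range_succ _ _

lemma qPoch_zero (a : ℝ) : qPoch q a 0 = 1 := by simp [qPoch]

section
variable (hden : ∀ j : ℕ, 1 ≤ j → 1 - q ^ j ≠ 0)
include hden

lemma fac_ne (j : ℕ) : 1 - q * q ^ j ≠ 0 := by
  have h := hden (j + 1) (Nat.succ_le_succ (Nat.zero_le _))
  rwa [pow_succ, mul_comm (q ^ j) q] at h

lemma qq_ne (n : ℕ) : qPoch q q n ≠ 0 := by
  induction n with
  | zero => simp [qPoch]
  | succ n ih => rw [qPoch_succ]; exact mul_ne_zero ih (fac_ne hden n)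

end

lemma qBinom_of_lt {n r : ℕ} (h : n < r) : qBinom q n r = 0 := by
  simp [qBinom, Nat.not_le.mpr h]

section
variable (hden : ∀ j : ℕ, 1 ≤ j → 1 - q ^ j ≠ 0)
include hden

lemma qBinom_self (n : ℕ) : qBinom q n n = 1 := by
  rw [qBinom, if_pos le_rfl, Nat.sub_self, qPoch_zero, mul_one, div_self (qq_ne hden n)]

lemma qBinom_zero (n : ℕ) : qBinom q n 0 = 1 := by
  rw [qBinom, if_pos (Nat.zero_le n), Nat.sub_zero, qPoch_zero, one_mul,
    div_self (qq_ne hden n)]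

lemma pascal (n r : ℕ) :
    qBinom q (n + 1) (r + 1) = qBinom q n (r + 1) + q ^ (n - r) * qBinom q n r := by
  rcases lt_trichotomy r n with h | rfl | h
  · obtain ⟨s, rfl⟩ : ∃ s, n = r + s + 1 := ⟨n - r - 1, by omega⟩
    have e1 : r + s + 1 + 1 - (r + 1) = s + 1 := by omega
    have e2 : r + s + 1 - (r + 1) = s := by omega
    have e3 : r + s + 1 - r = s + 1 := by omega
    rw [qBinom, if_pos (by omega), qBinom, if_pos (by omega), qBinom, if_pos (by omega),
      e1, e2, e3]
    have hP1 : qPoch q q (r + s + 1 + 1) = qPoch q q (r + s + 1) * (1 - q * q ^ (r + s + 1)) :=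
      qPoch_succ q (r + s + 1)
    have hPr : qPoch q q (r + 1) = qPoch q q r * (1 - q * q ^ r) := qPoch_succ q r
    have hPs : qPoch q q (s + 1) = qPoch q q s * (1 - q * q ^ s) := qPoch_succ q s
    rw [hP1, hPr, hPs]
    have h1 := qq_ne hden r
    have h2 := qq_ne hden s
    have h3 := fac_ne hden r
    have h4 := fac_ne hden s
    field_simp
    ring
  · rw [qBinom_self hden, qBinom_of_lt (Nat.lt_succ_self r), qBinom_self hden]
    simp
  · rw [qBinom_of_lt (by omega), qBinom_of_lt (by omega), qBinom_of_lt (by omega)]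
    simp

lemma hockey (r : ℕ) (hr : 1 ≤ r) :
    ∀ N, ∑ i ∈ Finset.Icc 1 N, q ^ i / (1 - q ^ i) * qBinom q i r
      = q ^ r / (1 - q ^ r) * qBinom q N r := by
  intro N
  induction N with
  | zero => simp [qBinom_of_lt (by omega : 0 < r)]
  | succ N ih =>
    rw [Finset.sum_Icc_succ_top (by omega : 1 ≤ N + 1), ih]
    rcases lt_trichotomy (N + 1) r with h | rfl | h
    · rw [qBinom_of_lt h, qBinom_of_lt (by omega : N < r)]; ring
    · rw [qBinom_of_lt (Nat.lt_succ_self N), qBinom_self hden]; ring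
    · -- r ≤ N
      obtain ⟨t, rfl⟩ : ∃ t, r = t + 1 := ⟨r - 1, by omega⟩
      obtain ⟨s, rfl⟩ : ∃ s, N = t + s + 1 := ⟨N - t - 1, by omega⟩
      have e1 : t + s + 1 - (t + 1) = s := by omega
      have e2 : t + s + 1 + 1 - (t + 1) = s + 1 := by omega
      rw [qBinom, if_pos (by omega : t + 1 ≤ t + s + 1),
        qBinom, if_pos (by omega : t + 1 ≤ t + s + 1 + 1), e1, e2]
      rw [qPoch_succ q (t + s + 1), qPoch_succ q t, qPoch_succ q s]
      have h1 := qq_ne hden t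
      have h2 := qq_ne hden s
      have h3 := fac_ne hden t
      have h4 := fac_ne hden s
      have h5 : (1 : ℝ) - q ^ (t + 1) ≠ 0 := hden (t + 1) (by omega)
      have h6 : (1 : ℝ) - q ^ (t + s + 1 + 1) ≠ 0 := hden (t + s + 1 + 1) (by omega)
      have hP : qPoch q q (t + s + 1) ≠ 0 := qq_ne hden (t + s + 1)
      field_simp
      ring

omit hden in
lemma tri (r : ℕ) : (r + 1) * r / 2 = r * (r - 1) / 2 + r := by
  have h := Nat.triangle_succ r
  simpa using h

lemma qbt (a : ℝ) : ∀ n, ∑ r ∈ Finset.range (n + 1),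
    qBinom q n r * (-1) ^ r * q ^ (r * (r - 1) / 2) * a ^ r = qPoch q a n := by
  intro n
  induction n with
  | zero => simp [qBinom_zero hden, qPoch_succ, qPoch_zero]
  | succ n ih =>
    have hsplit : ∀ r ∈ Finset.range (n + 1),
        qBinom q (n + 1) (r + 1) * (-1) ^ (r + 1) * q ^ ((r + 1) * (r + 1 - 1) / 2) * a ^ (r + 1)
        = qBinom q n (r + 1) * (-1) ^ (r + 1) * q ^ ((r + 1) * (r + 1 - 1) / 2) * a ^ (r + 1)
          + (-(a * q ^ n)) * (qBinom q n r * (-1) ^ r * q ^ (r * (r - 1) / 2) * a ^ r) := by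
      intro r hr
      have hrn : r ≤ n := by simpa [Nat.lt_succ_iff] using hr
      rw [pascal hden]
      have key : q ^ (n - r) * q ^ ((r + 1) * (r + 1 - 1) / 2)
          = q ^ n * q ^ (r * (r - 1) / 2) := by
        rw [← pow_add, ← pow_add]
        congr 1
        simp only [Nat.add_sub_cancel]
        rw [tri r]
        omega
      have expand : (qBinom q n (r + 1) + q ^ (n - r) * qBinom q n r) * (-1) ^ (r + 1)
            * q ^ ((r + 1) * (r + 1 - 1) / 2) * a ^ (r + 1)
          = qBinom q n (r + 1) * (-1) ^ (r + 1) * q ^ ((r + 1) * (r + 1 - 1) / 2) * a ^ (r + 1)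
            + (q ^ (n - r) * q ^ ((r + 1) * (r + 1 - 1) / 2)) * qBinom q n r * (-1) ^ (r + 1)
              * a ^ (r + 1) := by ring
      rw [expand, key, pow_succ a r, pow_succ (-1 : ℝ) r]
      ring
    have hg := Finset.sum_range_succ'
      (fun r : ℕ => qBinom q n r * (-1) ^ r * q ^ (r * (r - 1) / 2) * a ^ r) (n + 1)
    have hgs := Finset.sum_range_succ
      (fun r : ℕ => qBinom q n r * (-1) ^ r * q ^ (r * (r - 1) / 2) * a ^ r) (n + 1)
    have hF := Finset.sum_range_succ'
      (fun r : ℕ => qBinom q (n + 1) r * (-1) ^ r * q ^ (r * (r - 1) / 2) * a ^ r) (n + 1)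
    beta_reduce at hg hgs hF
    have second : ∑ r ∈ Finset.range (n + 1),
        (-(a * q ^ n)) * (qBinom q n r * (-1) ^ r * q ^ (r * (r - 1) / 2) * a ^ r)
        = (-(a * q ^ n)) * qPoch q a n := by
      rw [← Finset.mul_sum, ih]
    have hlast : qBinom q n (n + 1) * (-1) ^ (n + 1) * q ^ ((n + 1) * (n + 1 - 1) / 2)
        * a ^ (n + 1) = 0 := by
      rw [qBinom_of_lt (Nat.lt_succ_self n)]; ring
    have hF0 : qBinom q (n + 1) 0 * (-1) ^ 0 * q ^ (0 * (0 - 1) / 2) * a ^ 0 = 1 := by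
      simp [qBinom_zero hden]
    have hg0 : qBinom q n 0 * (-1) ^ 0 * q ^ (0 * (0 - 1) / 2) * a ^ 0 = 1 := by
      simp [qBinom_zero hden]
    rw [hF, Finset.sum_congr rfl hsplit, Finset.sum_add_distrib, qPoch_succ]
    linear_combination (-1 : ℝ) * hg + hgs + ih + second + hF0 - hg0 + hlast

lemma base (a : ℝ) (n : ℕ) (hn : 1 ≤ n) :
    qPoch q a n = ∑ r ∈ Finset.Icc 1 n,
      qBinom q n r * (-1) ^ (r - 1) * q ^ (r * (r - 1) / 2) * (1 - a ^ r) := by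
  have h1 := qbt hden a n
  have h2 := qbt hden 1 n
  have h10 : qPoch q 1 n = 0 := by
    apply Finset.prod_eq_zero (Finset.mem_range.mpr (by omega : 0 < n))
    simp
  rw [h10] at h2
  have hsub : Finset.Icc 1 n ⊆ Finset.range (n + 1) := by
    intro x hx; simp only [Finset.mem_Icc] at hx; exact Finset.mem_range.mpr (by omega)
  rw [Finset.sum_subset hsub (by
    intro x hx hx'
    simp only [Finset.mem_range] at hx
    simp only [Finset.mem_Icc, not_and, not_le] at hx'
    have : x = 0 := by omega
    subst this
    simp)]
  have key : ∀ r ∈ Finset.range (n + 1),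
      qBinom q n r * (-1) ^ (r - 1) * q ^ (r * (r - 1) / 2) * (1 - a ^ r)
      = qBinom q n r * (-1) ^ r * q ^ (r * (r - 1) / 2) * a ^ r
        - qBinom q n r * (-1) ^ r * q ^ (r * (r - 1) / 2) * (1 : ℝ) ^ r := by
    intro r _
    rcases r with _ | t
    · simp
    · simp only [Nat.add_sub_cancel, pow_succ (-1 : ℝ) t, one_pow]
      ring
  rw [Finset.sum_congr rfl key, Finset.sum_sub_distrib, h1, h2, sub_zero]

lemma chain_formula (z : ℝ) (k m : ℕ) :
    ∀ top, 1 ≤ top → chainSum q z k m top =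
      ∑ r ∈ Finset.Icc 1 top, qBinom q top r * (-1) ^ (r - 1) * q ^ (r * (r - 1) / 2)
        * (1 - (z * q ^ (-(k : ℤ))) ^ r) * (q ^ r / (1 - q ^ r)) ^ m := by
  induction m with
  | zero =>
    intro top htop
    rw [show chainSum q z k 0 top = qPoch q (z * q ^ (-(k : ℤ))) top from rfl,
      base hden _ top htop]
    exact Finset.sum_congr rfl (fun r _ => by rw [pow_zero, mul_one])
  | succ m ih =>
    intro top htop
    rw [show chainSum q z k (m + 1) top
        = ∑ i ∈ Finset.Icc 1 top, q ^ i / (1 - q ^ i) * chainSum q z k m i from rfl]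
    have step1 : ∀ i ∈ Finset.Icc 1 top, q ^ i / (1 - q ^ i) * chainSum q z k m i
        = ∑ r ∈ Finset.Icc 1 top, q ^ i / (1 - q ^ i)
            * (qBinom q i r * (-1) ^ (r - 1) * q ^ (r * (r - 1) / 2)
              * (1 - (z * q ^ (-(k : ℤ))) ^ r) * (q ^ r / (1 - q ^ r)) ^ m) := by
      intro i hi
      obtain ⟨hi1, hi2⟩ := Finset.mem_Icc.mp hi
      rw [ih i hi1, Finset.mul_sum]
      apply Finset.sum_subset (Finset.Icc_subset_Icc_right hi2)
      intro x hx hx'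
      have hix : i < x := by
        simp only [Finset.mem_Icc] at hx hx'
        omega
      rw [qBinom_of_lt hix]
      ring
    rw [Finset.sum_congr rfl step1, Finset.sum_comm]
    apply Finset.sum_congr rfl
    intro r hr
    obtain ⟨hr1, _⟩ := Finset.mem_Icc.mp hr
    calc (∑ i ∈ Finset.Icc 1 top, q ^ i / (1 - q ^ i)
            * (qBinom q i r * (-1) ^ (r - 1) * q ^ (r * (r - 1) / 2)
              * (1 - (z * q ^ (-(k : ℤ))) ^ r) * (q ^ r / (1 - q ^ r)) ^ m))
        = (∑ i ∈ Finset.Icc 1 top, q ^ i / (1 - q ^ i) * qBinom q i r)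
            * ((-1) ^ (r - 1) * q ^ (r * (r - 1) / 2)
              * (1 - (z * q ^ (-(k : ℤ))) ^ r) * (q ^ r / (1 - q ^ r)) ^ m) := by
          rw [Finset.sum_mul]
          exact Finset.sum_congr rfl (fun i _ => by ring)
      _ = (q ^ r / (1 - q ^ r) * qBinom q top r)
            * ((-1) ^ (r - 1) * q ^ (r * (r - 1) / 2)
              * (1 - (z * q ^ (-(k : ℤ))) ^ r) * (q ^ r / (1 - q ^ r)) ^ m) := by
          rw [hockey hden r hr1]
      _ = qBinom q top r * (-1) ^ (r - 1) * q ^ (r * (r - 1) / 2)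
            * (1 - (z * q ^ (-(k : ℤ))) ^ r) * (q ^ r / (1 - q ^ r)) ^ (m + 1) := by
          ring

end

end Eq45Aux

/-- The specialization (4.5) of the Fu–Lascoux identity. -/
theorem eq45 (q z : ℝ) (i k : ℕ) (hi : 0 < i) (hk : 0 < k) (hq : q ≠ 0)
    (hden1 : ∀ j : ℕ, 1 ≤ j → 1 - q ^ j ≠ 0) :
    chainSum q z k k i =
      ∑ r ∈ Finset.Icc 1 i,
        qBinom q i r * (-1) ^ (r - 1) * q ^ (r * (r - 1) / 2 + r * k) *
          (1 - z ^ r * q ^ (-((r : ℤ) * k))) / (1 - q ^ r) ^ k := by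
  rw [Eq45Aux.chain_formula hden1 z k k i hi]
  apply Finset.sum_congr rfl
  intro r hr
  obtain ⟨hr1, _⟩ := Finset.mem_Icc.mp hr
  have hqr : (1 : ℝ) - q ^ r ≠ 0 := hden1 r hr1
  have hz : (z * q ^ (-(k : ℤ))) ^ r = z ^ r * q ^ (-((r : ℤ) * k)) := by
    rw [mul_pow, ← zpow_natCast (q ^ (-(k : ℤ))) r, ← zpow_mul]
    congr 1
    push_cast
    ring
  have hpow : (q ^ r / (1 - q ^ r)) ^ k = q ^ (r * k) / (1 - q ^ r) ^ k := by
    rw [div_pow, ← pow_mul]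
  rw [hz, hpow, pow_add]
  have hne : ((1 : ℝ) - q ^ r) ^ k ≠ 0 := pow_ne_zero k hqr
  field_simp
end
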